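/- Let X ∈ ℝ^{(n+m)×(n+m)} be symmetric positive semidefinite with positive definite lower-right block X₂₂, and let Z ∈ ℝ^{n×n} be symmetric positive semidefinite. Then F* := −X₂₂⁻¹ X₁₂' minimizes the function F ↦ Tr(Z · [I;F]' X [I;F]) over all F ∈ ℝ^{m×n}. -/

import Mathlib

open Matrix

lemma psd_trace_nonneg {k : Type*} [Fintype k] [DecidableEq k]
    {M : Matrix k k ℝ} (hM : M.PosSemidef) : 0 ≤ trace M := by
  rw [trace]
  refine Finset.sum_nonneg fun i _ => ?_
  exact hM.diag_nonneg

lemma psd_trace_mul_nonneg {k : Type*} [Fintype k] [DecidableEq k]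
    {A B : Matrix k k ℝ} (hA : A.PosSemidef) (hB : B.PosSemidef) :
    0 ≤ trace (A * B) := by
  open scoped MatrixOrder Matrix.Norms.L2Operator in
  obtain ⟨C, rfl⟩ := CStarAlgebra.nonneg_iff_eq_star_mul_self.mp hA.nonneg
  rw [star_eq_conjTranspose, Matrix.mul_assoc, trace_mul_comm]
  exact psd_trace_nonneg (hB.mul_mul_conjTranspose_same C)

lemma quad_form_eq {n m : ℕ} (A : Matrix (Fin n) (Fin n) ℝ)
    (B : Matrix (Fin n) (Fin m) ℝ) (C : Matrix (Fin m) (Fin n) ℝ)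
    (D : Matrix (Fin m) (Fin m) ℝ) (F : Matrix (Fin m) (Fin n) ℝ) :
    (fromRows (1 : Matrix (Fin n) (Fin n) ℝ) F)ᵀ * fromBlocks A B C D * fromRows (1 : Matrix (Fin n) (Fin n) ℝ) F
      = A + B * F + Fᵀ * C + Fᵀ * D * F := by
  rw [transpose_fromRows, fromCols_mul_fromBlocks, fromCols_mul_fromRows]
  simp [Matrix.add_mul, Matrix.mul_assoc]
  abel

theorem stmt_5 {n m : ℕ}
    (X : Matrix (Fin n ⊕ Fin m) (Fin n ⊕ Fin m) ℝ)
    (hX : X.PosSemidef) (hX22 : X.toBlocks₂₂.PosDef)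
    (Z : Matrix (Fin n) (Fin n) ℝ) (hZ : Z.PosSemidef) :
    ∀ F : Matrix (Fin m) (Fin n) ℝ,
      trace (Z * ((fromRows (1 : Matrix (Fin n) (Fin n) ℝ) (-(X.toBlocks₂₂⁻¹ * X.toBlocks₁₂ᵀ)))ᵀ * X
          * (fromRows (1 : Matrix (Fin n) (Fin n) ℝ) (-(X.toBlocks₂₂⁻¹ * X.toBlocks₁₂ᵀ)))))
        ≤ trace (Z * ((fromRows (1 : Matrix (Fin n) (Fin n) ℝ) F)ᵀ * X * (fromRows (1 : Matrix (Fin n) (Fin n) ℝ) F))) := by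
  intro F
  set A := X.toBlocks₁₁ with hA
  set B := X.toBlocks₁₂ with hB
  set D := X.toBlocks₂₂ with hD
  -- symmetry facts
  have hXsym : Xᵀ = X := hX.isHermitian
  have hC : X.toBlocks₂₁ = Bᵀ := by
    ext i j
    have := congrFun (congrFun hXsym (Sum.inr i)) (Sum.inl j)
    simpa [hB, toBlocks₂₁, toBlocks₁₂, transpose_apply] using this.symm
  have hDsym : Dᵀ = D := by
    ext i j
    have := congrFun (congrFun hXsym (Sum.inr i)) (Sum.inr j)
    simpa [hD, toBlocks₂₂, transpose_apply] using this
  have hDinv_sym : D⁻¹ᵀ = D⁻¹ := by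
    rw [transpose_nonsing_inv, hDsym]
  have hDunit : IsUnit D.det := isUnit_iff_isUnit_det _ |>.1 hX22.isUnit
  have hDDinv : D * D⁻¹ = 1 := mul_nonsing_inv _ hDunit
  have hDinvD : D⁻¹ * D = 1 := nonsing_inv_mul _ hDunit
  have hXblocks : X = fromBlocks A B Bᵀ D := by
    rw [← hC, hA, hB, hD, fromBlocks_toBlocks]
  have e2 : D * (D⁻¹ * Bᵀ) = Bᵀ := by rw [← Matrix.mul_assoc, hDDinv, Matrix.one_mul]
  -- the quadratic form at F equals the one at F₀ plus Gᵀ D G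
  have key : ∀ G : Matrix (Fin m) (Fin n) ℝ,
      (fromRows (1 : Matrix (Fin n) (Fin n) ℝ) G)ᵀ * X * (fromRows (1 : Matrix (Fin n) (Fin n) ℝ) G)
        = (A - B * D⁻¹ * Bᵀ) + (G + D⁻¹ * Bᵀ)ᵀ * D * (G + D⁻¹ * Bᵀ) := by
    intro G
    rw [hXblocks, quad_form_eq]
    have h1 : (G + D⁻¹ * Bᵀ)ᵀ = Gᵀ + B * D⁻¹ := by
      rw [transpose_add, transpose_mul, hDinv_sym, transpose_transpose]
    have expand : (G + D⁻¹ * Bᵀ)ᵀ * D * (G + D⁻¹ * Bᵀ)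
        = Gᵀ * D * G + B * G + (Gᵀ * Bᵀ + B * D⁻¹ * Bᵀ) := by
      calc (G + D⁻¹ * Bᵀ)ᵀ * D * (G + D⁻¹ * Bᵀ)
          = (Gᵀ * D + B * (D⁻¹ * D)) * (G + D⁻¹ * Bᵀ) := by
            rw [h1, Matrix.add_mul, Matrix.mul_assoc]
        _ = (Gᵀ * D + B) * (G + D⁻¹ * Bᵀ) := by rw [hDinvD, Matrix.mul_one]
        _ = Gᵀ * D * G + B * G + (Gᵀ * D * (D⁻¹ * Bᵀ) + B * (D⁻¹ * Bᵀ)) := by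
            rw [Matrix.mul_add, Matrix.add_mul, Matrix.add_mul]
        _ = Gᵀ * D * G + B * G + (Gᵀ * Bᵀ + B * D⁻¹ * Bᵀ) := by
            rw [Matrix.mul_assoc Gᵀ D (D⁻¹ * Bᵀ), e2, ← Matrix.mul_assoc B]
    rw [expand]
    abel
  have hF0 : -(D⁻¹ * Bᵀ) + D⁻¹ * Bᵀ = (0 : Matrix (Fin m) (Fin n) ℝ) := by
    simp
  have hpsd : ((F + D⁻¹ * Bᵀ)ᵀ * D * (F + D⁻¹ * Bᵀ)).PosSemidef := by
    have := hX22.posSemidef.conjTranspose_mul_mul_same (F + D⁻¹ * Bᵀ)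
    simpa [hD] using this
  rw [key F, key (-(D⁻¹ * Bᵀ)), hF0]
  simp only [transpose_zero, Matrix.mul_zero, Matrix.zero_mul, add_zero]
  rw [Matrix.mul_add, trace_add]
  exact le_add_of_nonneg_right (psd_trace_mul_nonneg hZ hpsd)
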